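/- Let a_1, a_2, a_3, a_4 be four points in ℝ² (the BSs), no three of which are collinear. Let {p_1, p_2} and {q_1, q_2} be two 2-element subsets of ℝ² with {p_1, p_2} ∩ {q_1, q_2} = ∅, and suppose D_m({p_1, p_2}) = D_m({q_1, q_2}) for m = 1, 2, 3, 4. Then, after possibly swapping the labels of q_1 and q_2, there exists a partition of {1,2,3,4} into two pairs {i,j} and {k,l} such that: (1) dist(a_t, p_1) = dist(a_t, q_1) and dist(a_t, p_2) = dist(a_t, q_2) for every t ∈ {i,j}; (2) dist(a_t, p_1) = dist(a_t, q_2) and dist(a_t, p_2) = dist(a_t, q_1) for every t ∈ {k,l}; and (3) the line through a_i and a_j is perpendicular to the line through a_k and a_l. -/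

import Mathlib

noncomputable section

/-- The Euclidean plane ℝ². -/
abbrev Plane := EuclideanSpace ℝ (Fin 2)

/-- The range set of a BS located at `a` with respect to a target set `X`:
the set of distances from `a` to the points of `X`. -/
def rangeSet (a : Plane) (X : Set Plane) : Set ℝ := (fun p => dist a p) '' X

/- Auxiliary lemmas -/

lemma det_zero {w0 w1 u0 u1 v0 v1 : ℝ} (hw : ¬(w0 = 0 ∧ w1 = 0))
    (hu : w0*u0 + w1*u1 = 0) (hv : w0*v0 + w1*v1 = 0) : u0*v1 - u1*v0 = 0 := by
  have k0 : w0 * (u0*v1 - u1*v0) = 0 := by linear_combination v1*hu - u1*hv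
  have k1 : w1 * (u0*v1 - u1*v0) = 0 := by linear_combination u0*hv - v0*hu
  by_cases h0 : w0 = 0
  · have h1 : w1 ≠ 0 := fun h => hw ⟨h0, h⟩
    exact (mul_eq_zero.mp k1).resolve_left h1
  · exact (mul_eq_zero.mp k0).resolve_left h0

lemma perp_transfer {w0 w1 z0 z1 x0 x1 : ℝ} (hw : ¬(w0 = 0 ∧ w1 = 0))
    (hdet : w0*z1 - w1*z0 = 0) (hx : w0*x0 + w1*x1 = 0) : z0*x0 + z1*x1 = 0 := by
  have k0 : w0 * (z0*x0 + z1*x1) = 0 := by linear_combination z0*hx + x1*hdet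
  have k1 : w1 * (z0*x0 + z1*x1) = 0 := by linear_combination z1*hx - x0*hdet
  by_cases h0 : w0 = 0
  · have h1 : w1 ≠ 0 := fun h => hw ⟨h0, h⟩
    exact (mul_eq_zero.mp k1).resolve_left h1
  · exact (mul_eq_zero.mp k0).resolve_left h0

lemma perp_perp {w10 w11 w20 w21 u0 u1 v0 v1 : ℝ}
    (hw1 : ¬(w10 = 0 ∧ w11 = 0)) (hw2 : ¬(w20 = 0 ∧ w21 = 0))
    (hu : w10*u0 + w11*u1 = 0) (hv : w20*v0 + w21*v1 = 0)
    (hw : w10*w20 + w11*w21 = 0) : u0*v0 + u1*v1 = 0 := by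
  have hdet : u0*w21 - u1*w20 = 0 := det_zero hw1 hu hw
  have k0 : w20 * (u0*v0 + u1*v1) = 0 := by linear_combination u0*hv - v1*hdet
  have k1 : w21 * (u0*v0 + u1*v1) = 0 := by linear_combination u1*hv + v0*hdet
  by_cases h0 : w20 = 0
  · have h1 : w21 ≠ 0 := fun h => hw2 ⟨h0, h⟩
    exact (mul_eq_zero.mp k1).resolve_left h1
  · exact (mul_eq_zero.mp k0).resolve_left h0

lemma coords_ne {p q : Plane} (h : p ≠ q) : ¬(q 0 - p 0 = 0 ∧ q 1 - p 1 = 0) := by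
  rintro ⟨h0, h1⟩
  exact h (by ext i; fin_cases i <;> [skip; skip] <;> simp <;> linarith)

lemma collinear_of_det {x y z : Plane}
    (h : (y 0 - x 0) * (z 1 - x 1) - (y 1 - x 1) * (z 0 - x 0) = 0) :
    Collinear ℝ ({x, y, z} : Set Plane) := by
  by_cases hyx : y = x
  · rw [hyx, Set.insert_comm, Set.insert_idem]
    exact collinear_pair ℝ x z
  · have hv : y 0 - x 0 ≠ 0 ∨ y 1 - x 1 ≠ 0 := by
      by_contra hc
      push_neg at hc
      exact hyx (by ext i; fin_cases i <;> simp <;> linarith [hc.1, hc.2])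
    rw [collinear_iff_of_mem (Set.mem_insert x ({y, z} : Set Plane))]
    refine ⟨y - x, ?_⟩
    intro p hp
    rcases hp with rfl | rfl | rfl
    · exact ⟨0, by simp⟩
    · exact ⟨1, by simp⟩
    · rcases hv with h0 | h0
      · refine ⟨(p 0 - x 0) / (y 0 - x 0), ?_⟩
        ext i
        fin_cases i
        · simp [vadd_eq_add]; field_simp; ring
        · simp [vadd_eq_add]; field_simp; linear_combination h
      · refine ⟨(p 1 - x 1) / (y 1 - x 1), ?_⟩
        ext i
        fin_cases i
        · simp [vadd_eq_add]; field_simp; linear_combination -h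
        · simp [vadd_eq_add]; field_simp; ring

lemma pair_eq {α : Type*} (a b c d : α) (h : ({a, b} : Set α) = {c, d}) :
    (a = c ∧ b = d) ∨ (a = d ∧ b = c) := by
  have ha : a = c ∨ a = d := by
    have : a ∈ ({c, d} : Set α) := h ▸ (by simp)
    simpa using this
  have hb : b = c ∨ b = d := by
    have : b ∈ ({c, d} : Set α) := h ▸ (by simp)
    simpa using this
  have hc : c = a ∨ c = b := by
    have : c ∈ ({a, b} : Set α) := h ▸ (by simp)
    simpa using this
  have hd : d = a ∨ d = b := by
    have : d ∈ ({a, b} : Set α) := h ▸ (by simp)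
    simpa using this
  rcases ha with h1 | h1 <;> rcases hb with h2 | h2
  · rcases hd with h3 | h3
    · exact Or.inl ⟨h1, h2.trans (h1.symm.trans h3.symm)⟩
    · exact Or.inl ⟨h1, h3.symm⟩
  · exact Or.inl ⟨h1, h2⟩
  · exact Or.inr ⟨h1, h2⟩
  · rcases hc with h3 | h3
    · exact Or.inr ⟨h1, h2.trans (h1.symm.trans h3.symm)⟩
    · exact Or.inr ⟨h1, h3.symm⟩

lemma pick (P Q : Fin 4 → Prop) (h : ∀ m, P m ∨ Q m)
    (hP : ∀ i j k : Fin 4, i ≠ j → i ≠ k → j ≠ k → ¬(P i ∧ P j ∧ P k))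
    (hQ : ∀ i j k : Fin 4, i ≠ j → i ≠ k → j ≠ k → ¬(Q i ∧ Q j ∧ Q k)) :
    ∃ i j k l : Fin 4, ({i, j, k, l} : Finset (Fin 4)) = Finset.univ ∧
      i ≠ j ∧ i ≠ k ∧ i ≠ l ∧ j ≠ k ∧ j ≠ l ∧ k ≠ l ∧ P i ∧ P j ∧ Q k ∧ Q l := by
  rcases h 0 with h0 | h0 <;> rcases h 1 with h1 | h1 <;>
    rcases h 2 with h2 | h2 <;> rcases h 3 with h3 | h3 <;>
  first
  | exact absurd (show P 0 ∧ P 1 ∧ P 2 from ⟨h0, h1, h2⟩) (hP 0 1 2 (by decide) (by decide) (by decide))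
  | exact absurd (show P 0 ∧ P 1 ∧ P 3 from ⟨h0, h1, h3⟩) (hP 0 1 3 (by decide) (by decide) (by decide))
  | exact absurd (show P 0 ∧ P 2 ∧ P 3 from ⟨h0, h2, h3⟩) (hP 0 2 3 (by decide) (by decide) (by decide))
  | exact absurd (show P 1 ∧ P 2 ∧ P 3 from ⟨h1, h2, h3⟩) (hP 1 2 3 (by decide) (by decide) (by decide))
  | exact absurd (show Q 0 ∧ Q 1 ∧ Q 2 from ⟨h0, h1, h2⟩) (hQ 0 1 2 (by decide) (by decide) (by decide))
  | exact absurd (show Q 0 ∧ Q 1 ∧ Q 3 from ⟨h0, h1, h3⟩) (hQ 0 1 3 (by decide) (by decide) (by decide))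
  | exact absurd (show Q 0 ∧ Q 2 ∧ Q 3 from ⟨h0, h2, h3⟩) (hQ 0 2 3 (by decide) (by decide) (by decide))
  | exact absurd (show Q 1 ∧ Q 2 ∧ Q 3 from ⟨h1, h2, h3⟩) (hQ 1 2 3 (by decide) (by decide) (by decide))
  | exact ⟨0, 1, 2, 3, by decide, by decide, by decide, by decide, by decide, by decide, by decide, h0, h1, h2, h3⟩
  | exact ⟨0, 2, 1, 3, by decide, by decide, by decide, by decide, by decide, by decide, by decide, h0, h2, h1, h3⟩
  | exact ⟨0, 3, 1, 2, by decide, by decide, by decide, by decide, by decide, by decide, by decide, h0, h3, h1, h2⟩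
  | exact ⟨1, 2, 0, 3, by decide, by decide, by decide, by decide, by decide, by decide, by decide, h1, h2, h0, h3⟩
  | exact ⟨1, 3, 0, 2, by decide, by decide, by decide, by decide, by decide, by decide, by decide, h1, h3, h0, h2⟩
  | exact ⟨2, 3, 0, 1, by decide, by decide, by decide, by decide, by decide, by decide, by decide, h2, h3, h0, h1⟩

lemma dist_eq_iff' (x p q : Plane) :
    dist x p = dist x q ↔
      (q 0 - p 0) * (x 0 + x 0 - p 0 - q 0) + (q 1 - p 1) * (x 1 + x 1 - p 1 - q 1) = 0 := by
  have hp2 : dist x p ^ 2 = (x 0 - p 0)^2 + (x 1 - p 1)^2 := by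
    rw [EuclideanSpace.dist_eq, Real.sq_sqrt (by positivity)]
    simp [Fin.sum_univ_two, Real.dist_eq, sq_abs]
  have hq2 : dist x q ^ 2 = (x 0 - q 0)^2 + (x 1 - q 1)^2 := by
    rw [EuclideanSpace.dist_eq, Real.sq_sqrt (by positivity)]
    simp [Fin.sum_univ_two, Real.dist_eq, sq_abs]
  constructor
  · intro h
    have h2 : dist x p ^ 2 = dist x q ^ 2 := by rw [h]
    rw [hp2, hq2] at h2
    linear_combination h2
  · intro h
    have h2 : dist x p ^ 2 = dist x q ^ 2 := by rw [hp2, hq2]; linear_combination h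
    have h3 : (dist x p - dist x q) * (dist x p + dist x q) = 0 := by linear_combination h2
    rcases mul_eq_zero.mp h3 with h4 | h4
    · linarith
    · have n1 : (0:ℝ) ≤ dist x p := dist_nonneg
      have n2 : (0:ℝ) ≤ dist x q := dist_nonneg
      linarith

lemma inner_sub_coords (x y z w : Plane) :
    (inner ℝ (x - y) (z - w) : ℝ) = (x 0 - y 0) * (z 0 - w 0) + (x 1 - y 1) * (z 1 - w 1) := by
  simp [PiLp.inner_apply, RCLike.inner_apply, conj_trivial, Fin.sum_univ_two]; ring

/-- **Appendix B structural claim.** With `M = 4` BSs, no three of which are collinear, if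
two disjoint two-element target sets `{p₁, p₂}` and `{q₁, q₂}` have the same range set at
every BS, then (after possibly swapping the labels of `q₁` and `q₂`, captured by `r₁, r₂`)
the BSs can be partitioned into two pairs `{i, j}` and `{k, l}` such that the BSs in the
first pair match `p₁ ↔ r₁`, `p₂ ↔ r₂`, the BSs in the second pair match `p₁ ↔ r₂`,
`p₂ ↔ r₁`, and the line through `a i, a j` is perpendicular to the line through
`a k, a l`. -/
theorem ghost_structure_two_targets (a : Fin 4 → Plane)
    (hcol : ∀ i j k : Fin 4, i ≠ j → i ≠ k → j ≠ k →
      ¬ Collinear ℝ ({a i, a j, a k} : Set Plane))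
    (p₁ p₂ q₁ q₂ : Plane) (hp : p₁ ≠ p₂) (hq : q₁ ≠ q₂)
    (hdisj : ({p₁, p₂} : Set Plane) ∩ ({q₁, q₂} : Set Plane) = ∅)
    (hranges : ∀ m : Fin 4,
      rangeSet (a m) ({p₁, p₂} : Set Plane) = rangeSet (a m) ({q₁, q₂} : Set Plane)) :
    ∃ r₁ r₂ : Plane, ({r₁, r₂} : Set Plane) = ({q₁, q₂} : Set Plane) ∧
      ∃ i j k l : Fin 4, ({i, j, k, l} : Finset (Fin 4)) = Finset.univ ∧
        (∀ t : Fin 4, t = i ∨ t = j →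
          dist (a t) p₁ = dist (a t) r₁ ∧ dist (a t) p₂ = dist (a t) r₂) ∧
        (∀ t : Fin 4, t = k ∨ t = l →
          dist (a t) p₁ = dist (a t) r₂ ∧ dist (a t) p₂ = dist (a t) r₁) ∧
        (inner ℝ (a j - a i) (a l - a k) : ℝ) = 0 := by
  -- disjointness gives the four pointwise inequalities
  have hne : ∀ x ∈ ({p₁, p₂} : Set Plane), ∀ y ∈ ({q₁, q₂} : Set Plane), x ≠ y := by
    intro x hx y hy hxy
    have hmem : x ∈ ({p₁, p₂} : Set Plane) ∩ ({q₁, q₂} : Set Plane) := ⟨hx, hxy ▸ hy⟩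
    rw [hdisj] at hmem
    exact hmem
  have h11 : p₁ ≠ q₁ := hne p₁ (by simp) q₁ (by simp)
  have h12 : p₁ ≠ q₂ := hne p₁ (by simp) q₂ (by simp)
  have h21 : p₂ ≠ q₁ := hne p₂ (by simp) q₁ (by simp)
  have h22 : p₂ ≠ q₂ := hne p₂ (by simp) q₂ (by simp)
  -- each BS matches one of the two patterns
  have hPQ : ∀ m : Fin 4,
      (dist (a m) p₁ = dist (a m) q₁ ∧ dist (a m) p₂ = dist (a m) q₂) ∨
      (dist (a m) p₁ = dist (a m) q₂ ∧ dist (a m) p₂ = dist (a m) q₁) := by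
    intro m
    have h := hranges m
    rw [rangeSet, rangeSet, Set.image_pair, Set.image_pair] at h
    exact pair_eq _ _ _ _ h
  -- distinct indices give distinct BSs
  have hthird : ∀ s t : Fin 4, ∃ u : Fin 4, u ≠ s ∧ u ≠ t := by decide
  have hainj : ∀ s t : Fin 4, s ≠ t → a s ≠ a t := by
    intro s t hst he
    obtain ⟨u, hu1, hu2⟩ := hthird s t
    apply hcol s t u hst hu1.symm hu2.symm
    rw [he, Set.insert_idem]
    exact collinear_pair ℝ (a t) (a u)
  -- no three BSs share a pattern
  have key3 : ∀ (pp qq : Plane), pp ≠ qq → ∀ i j k : Fin 4, i ≠ j → i ≠ k → j ≠ k →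
      dist (a i) pp = dist (a i) qq → dist (a j) pp = dist (a j) qq →
      dist (a k) pp = dist (a k) qq → False := by
    intro pp qq hppqq i j k hij hik hjk h1 h2 h3
    rw [dist_eq_iff'] at h1 h2 h3
    apply hcol i j k hij hik hjk
    apply collinear_of_det
    have hw := coords_ne hppqq
    have d1 : (qq 0 - pp 0) * (a j 0 - a i 0) + (qq 1 - pp 1) * (a j 1 - a i 1) = 0 := by
      linear_combination (h2 - h1) / 2
    have d2 : (qq 0 - pp 0) * (a k 0 - a i 0) + (qq 1 - pp 1) * (a k 1 - a i 1) = 0 := by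
      linear_combination (h3 - h1) / 2
    exact det_zero hw d1 d2
  have hP3 : ∀ i j k : Fin 4, i ≠ j → i ≠ k → j ≠ k →
      ¬((dist (a i) p₁ = dist (a i) q₁ ∧ dist (a i) p₂ = dist (a i) q₂) ∧
        (dist (a j) p₁ = dist (a j) q₁ ∧ dist (a j) p₂ = dist (a j) q₂) ∧
        (dist (a k) p₁ = dist (a k) q₁ ∧ dist (a k) p₂ = dist (a k) q₂)) :=
    fun i j k h1 h2 h3 h => key3 p₁ q₁ h11 i j k h1 h2 h3 h.1.1 h.2.1.1 h.2.2.1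
  have hQ3 : ∀ i j k : Fin 4, i ≠ j → i ≠ k → j ≠ k →
      ¬((dist (a i) p₁ = dist (a i) q₂ ∧ dist (a i) p₂ = dist (a i) q₁) ∧
        (dist (a j) p₁ = dist (a j) q₂ ∧ dist (a j) p₂ = dist (a j) q₁) ∧
        (dist (a k) p₁ = dist (a k) q₂ ∧ dist (a k) p₂ = dist (a k) q₁)) :=
    fun i j k h1 h2 h3 h => key3 p₁ q₂ h12 i j k h1 h2 h3 h.1.1 h.2.1.1 h.2.2.1
  obtain ⟨i, j, k, l, huniv, hij, hik, hil, hjk, hjl, hkl, hPi, hPj, hQk, hQl⟩ :=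
    pick _ _ hPQ hP3 hQ3
  refine ⟨q₁, q₂, rfl, i, j, k, l, huniv, ?_, ?_, ?_⟩
  · rintro t (rfl | rfl)
    · exact hPi
    · exact hPj
  · rintro t (rfl | rfl)
    · exact hQk
    · exact hQl
  -- the geometric core
  have e1A := (dist_eq_iff' (a i) p₁ q₁).mp hPi.1
  have e2A := (dist_eq_iff' (a i) p₂ q₂).mp hPi.2
  have e1B := (dist_eq_iff' (a j) p₁ q₁).mp hPj.1
  have e2B := (dist_eq_iff' (a j) p₂ q₂).mp hPj.2
  have f1C := (dist_eq_iff' (a k) p₁ q₂).mp hQk.1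
  have f2C := (dist_eq_iff' (a k) p₂ q₁).mp hQk.2
  have f1D := (dist_eq_iff' (a l) p₁ q₂).mp hQl.1
  have f2D := (dist_eq_iff' (a l) p₂ q₁).mp hQl.2
  have hw1 : ¬(q₁ 0 - p₁ 0 = 0 ∧ q₁ 1 - p₁ 1 = 0) := coords_ne h11
  have hw1' : ¬(q₂ 0 - p₂ 0 = 0 ∧ q₂ 1 - p₂ 1 = 0) := coords_ne h22
  have hw2 : ¬(q₂ 0 - p₁ 0 = 0 ∧ q₂ 1 - p₁ 1 = 0) := coords_ne h12
  have hw2' : ¬(q₁ 0 - p₂ 0 = 0 ∧ q₁ 1 - p₂ 1 = 0) := coords_ne h21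
  have hu0 : ¬(a j 0 - a i 0 = 0 ∧ a j 1 - a i 1 = 0) := coords_ne (hainj i j hij)
  have hv0 : ¬(a l 0 - a k 0 = 0 ∧ a l 1 - a k 1 = 0) := coords_ne (hainj k l hkl)
  have hu1 : (q₁ 0 - p₁ 0) * (a j 0 - a i 0) + (q₁ 1 - p₁ 1) * (a j 1 - a i 1) = 0 := by
    linear_combination (e1B - e1A) / 2
  have hu2 : (q₂ 0 - p₂ 0) * (a j 0 - a i 0) + (q₂ 1 - p₂ 1) * (a j 1 - a i 1) = 0 := by
    linear_combination (e2B - e2A) / 2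
  have hv1 : (q₂ 0 - p₁ 0) * (a l 0 - a k 0) + (q₂ 1 - p₁ 1) * (a l 1 - a k 1) = 0 := by
    linear_combination (f1D - f1C) / 2
  have hv2 : (q₁ 0 - p₂ 0) * (a l 0 - a k 0) + (q₁ 1 - p₂ 1) * (a l 1 - a k 1) = 0 := by
    linear_combination (f2D - f2C) / 2
  have hu1s : (a j 0 - a i 0) * (q₁ 0 - p₁ 0) + (a j 1 - a i 1) * (q₁ 1 - p₁ 1) = 0 := by
    linear_combination hu1
  have hu2s : (a j 0 - a i 0) * (q₂ 0 - p₂ 0) + (a j 1 - a i 1) * (q₂ 1 - p₂ 1) = 0 := by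
    linear_combination hu2
  have hv1s : (a l 0 - a k 0) * (q₂ 0 - p₁ 0) + (a l 1 - a k 1) * (q₂ 1 - p₁ 1) = 0 := by
    linear_combination hv1
  have hv2s : (a l 0 - a k 0) * (q₁ 0 - p₂ 0) + (a l 1 - a k 1) * (q₁ 1 - p₂ 1) = 0 := by
    linear_combination hv2
  have hdet1 : (q₁ 0 - p₁ 0) * (q₂ 1 - p₂ 1) - (q₁ 1 - p₁ 1) * (q₂ 0 - p₂ 0) = 0 :=
    det_zero hu0 hu1s hu2s
  have hdet2 : (q₂ 0 - p₁ 0) * (q₁ 1 - p₂ 1) - (q₂ 1 - p₁ 1) * (q₁ 0 - p₂ 0) = 0 :=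
    det_zero hv0 hv1s hv2s
  rw [inner_sub_coords]
  by_cases hz : q₁ 0 + q₂ 0 - p₁ 0 - p₂ 0 = 0 ∧ q₁ 1 + q₂ 1 - p₁ 1 - p₂ 1 = 0
  · -- the two target pairs share a common midpoint
    have hkey : (q₁ 0 - p₁ 0) * (q₁ 0 - p₂ 0) + (q₁ 1 - p₁ 1) * (q₁ 1 - p₂ 1) = 0 := by
      linear_combination (-1/2) * e1A + (-1/2) * e2A +
        (a i 0 - (p₁ 0 + p₂ 0 - q₁ 0 + q₂ 0) / 2) * hz.1 +
        (a i 1 - (p₁ 1 + p₂ 1 - q₁ 1 + q₂ 1) / 2) * hz.2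
    exact perp_perp hw1 hw2' hu1 hv2 hkey
  · -- otherwise all four BSs would be collinear: contradiction
    exfalso
    have hd1z : (q₁ 0 - p₁ 0) * (q₁ 1 + q₂ 1 - p₁ 1 - p₂ 1) -
        (q₁ 1 - p₁ 1) * (q₁ 0 + q₂ 0 - p₁ 0 - p₂ 0) = 0 := by linear_combination hdet1
    have hd1'z : (q₂ 0 - p₂ 0) * (q₁ 1 + q₂ 1 - p₁ 1 - p₂ 1) -
        (q₂ 1 - p₂ 1) * (q₁ 0 + q₂ 0 - p₁ 0 - p₂ 0) = 0 := by linear_combination -hdet1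
    have hd2z : (q₂ 0 - p₁ 0) * (q₁ 1 + q₂ 1 - p₁ 1 - p₂ 1) -
        (q₂ 1 - p₁ 1) * (q₁ 0 + q₂ 0 - p₁ 0 - p₂ 0) = 0 := by linear_combination hdet2
    have hd2'z : (q₁ 0 - p₂ 0) * (q₁ 1 + q₂ 1 - p₁ 1 - p₂ 1) -
        (q₁ 1 - p₂ 1) * (q₁ 0 + q₂ 0 - p₁ 0 - p₂ 0) = 0 := by linear_combination -hdet2
    have zE1A := perp_transfer hw1 hd1z e1A
    have zE1B := perp_transfer hw1 hd1z e1B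
    have zE2A := perp_transfer hw1' hd1'z e2A
    have zF1C := perp_transfer hw2 hd2z f1C
    have zF2C := perp_transfer hw2' hd2'z f2C
    have zu : (q₁ 0 + q₂ 0 - p₁ 0 - p₂ 0) * (a j 0 - a i 0) +
        (q₁ 1 + q₂ 1 - p₁ 1 - p₂ 1) * (a j 1 - a i 1) = 0 := by
      linear_combination (zE1B - zE1A) / 2
    have hq21z : (q₁ 0 + q₂ 0 - p₁ 0 - p₂ 0) * (q₂ 0 - q₁ 0) +
        (q₁ 1 + q₂ 1 - p₁ 1 - p₂ 1) * (q₂ 1 - q₁ 1) = 0 := by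
      linear_combination (zE1A - zE2A - zF1C + zF2C) / 2
    have zCA : (q₁ 0 + q₂ 0 - p₁ 0 - p₂ 0) * (a k 0 - a i 0) +
        (q₁ 1 + q₂ 1 - p₁ 1 - p₂ 1) * (a k 1 - a i 1) = 0 := by
      linear_combination (zF1C - zE1A) / 2 + hq21z / 2
    exact hcol i j k hij hik hjk (collinear_of_det (det_zero hz zu zCA))
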